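/- Let G be the n-cycle graph with n ≥ 3. Any candy-passing game on G with at least 3n candies eventually reaches a fixed configuration. -/

import Mathlib

open Finset

/-- One round of the candy-passing game: each vertex holding at least its degree
passes one candy to each neighbor. -/
def candyRound {V : Type*} [Fintype V] [DecidableEq V]
    (G : SimpleGraph V) [DecidableRel G.Adj] (a : V → ℕ) : V → ℕ :=
  fun v => (if G.degree v ≤ a v then a v - G.degree v else a v) +
    ((G.neighborFinset v).filter fun u => G.degree u ≤ a u).card

section Aux
variable {d : ℕ}

/-- indicator of "richness" (holding at least 2 candies) -/
def bb (a : Fin (d+3) → ℕ) (u : Fin (d+3)) : ℕ := if 2 ≤ a u then 1 else 0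

lemma bb_cases (a : Fin (d+3) → ℕ) (u : Fin (d+3)) :
    (bb a u = 1 ∧ 2 ≤ a u) ∨ (bb a u = 0 ∧ a u ≤ 1) := by
  unfold bb; split_ifs with h
  · exact Or.inl ⟨rfl, h⟩
  · exact Or.inr ⟨rfl, by omega⟩

lemma sub_one_ne_add_one (v : Fin (d+3)) : v - 1 ≠ v + 1 := by
  have h := SimpleGraph.cycleGraph_degree_three_le (n := d) (v := v)
  rw [SimpleGraph.cycleGraph_degree_two_le] at h
  intro he
  rw [he] at h
  simp at h

lemma candyRound_cycle_apply (a : Fin (d+3) → ℕ) (v : Fin (d+3)) :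
    candyRound (SimpleGraph.cycleGraph (d+3)) a v + 2 * bb a v
      = a v + bb a (v-1) + bb a (v+1) := by
  unfold candyRound bb
  simp only [SimpleGraph.cycleGraph_degree_three_le]
  rw [SimpleGraph.cycleGraph_neighborFinset, Finset.card_filter,
    Finset.sum_pair (sub_one_ne_add_one v)]
  split_ifs <;> omega

lemma sum_candyRound_cycle (a : Fin (d+3) → ℕ) :
    ∑ u, candyRound (SimpleGraph.cycleGraph (d+3)) a u = ∑ u, a u := by
  have hs : ∑ v, (candyRound (SimpleGraph.cycleGraph (d+3)) a v + 2 * bb a v)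
      = ∑ v, (a v + bb a (v-1) + bb a (v+1)) :=
    Finset.sum_congr rfl fun v _ => candyRound_cycle_apply a v
  rw [Finset.sum_add_distrib, Finset.sum_add_distrib, Finset.sum_add_distrib,
    ← Finset.mul_sum] at hs
  have e1 : ∑ v, bb a (v - 1) = ∑ v, bb a v := by
    simpa using Equiv.sum_comp (Equiv.subRight (1 : Fin (d+3))) (bb a)
  have e2 : ∑ v, bb a (v + 1) = ∑ v, bb a v := by
    simpa using Equiv.sum_comp (Equiv.addRight (1 : Fin (d+3))) (bb a)
  rw [e1, e2] at hs
  omega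

lemma const_of_antitone_between (f : ℕ → ℕ) (N p : ℕ)
    (h : ∀ s, N ≤ s → s < N + p → f (s+1) ≤ f s) (he : f (N+p) = f N) :
    ∀ s, N ≤ s → s ≤ N + p → f s = f N := by
  have up : ∀ e, e ≤ p → f (N+e) ≤ f N := by
    intro e he'
    induction e with
    | zero => simp
    | succ k ih =>
      exact le_trans (by simpa [Nat.add_assoc] using h (N+k) (by omega) (by omega))
        (ih (by omega))
  have down : ∀ e, e ≤ p → f (N+p) ≤ f (N + p - e) := by
    intro e he'
    induction e with
    | zero => simp
    | succ k ih =>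
      have h2 : N + p - k = (N + p - (k+1)) + 1 := by omega
      calc f (N+p) ≤ f (N+p-k) := ih (by omega)
        _ ≤ f (N+p-(k+1)) := by rw [h2]; exact h _ (by omega) (by omega)
  intro s hs hs'
  have h1 : f s ≤ f N := by
    have := up (s - N) (by omega); rwa [show N + (s-N) = s by omega] at this
  have h2 : f N ≤ f s := by
    have := down (N + p - s) (by omega)
    rw [show N + p - (N+p-s) = s by omega] at this; omega
  omega

end Aux

abbrev AA (d : ℕ) (a₀ : Fin (d+3) → ℕ) (t : ℕ) : Fin (d+3) → ℕ :=
  (candyRound (SimpleGraph.cycleGraph (d+3)))^[t] a₀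

open scoped Fin.NatCast Fin.CommRing in
lemma main_lemma (d : ℕ) (a₀ : Fin (d+3) → ℕ) (htot : 3 * (d+3) ≤ ∑ v, a₀ v) :
    ∃ N : ℕ, ∀ k, N ≤ k → AA d a₀ k = AA d a₀ N := by
  set A := AA d a₀ with hAdef
  have hA : ∀ t, A (t+1) = candyRound (SimpleGraph.cycleGraph (d+3)) (A t) := by
    intro t
    simp only [hAdef, AA, Function.iterate_succ_apply']
  have hiter : ∀ s e, A (s + e) = (candyRound (SimpleGraph.cycleGraph (d+3)))^[e] (A s) := by
    intro s e
    simp only [hAdef, AA, ← Function.iterate_add_apply, Nat.add_comm]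
  have hstep : ∀ t u, A (t+1) u + 2 * bb (A t) u
      = A t u + bb (A t) (u-1) + bb (A t) (u+1) := by
    intro t u
    rw [hA t]
    exact candyRound_cycle_apply (A t) u
  -- sum conservation
  have hsum : ∀ t, ∑ u, A t u = ∑ u, a₀ u := by
    intro t
    induction t with
    | zero => rfl
    | succ k ih => rw [hA k, sum_candyRound_cycle, ih]
  -- boundedness
  have hbound : ∀ t u, A t u ≤ ∑ v, a₀ v := by
    intro t u
    calc A t u ≤ ∑ v, A t v :=
      Finset.single_le_sum (fun i _ => Nat.zero_le _) (mem_univ u)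
    _ = ∑ v, a₀ v := hsum t
  -- eventual periodicity via pigeonhole
  obtain ⟨N, p, hp, hNp⟩ : ∃ N p, 0 < p ∧ A (N + p) = A N := by
    obtain ⟨x, y, hxy, hgxy⟩ := Finite.exists_ne_map_eq_of_infinite
      (fun t => (fun u => (⟨A t u, Nat.lt_succ_of_le (hbound t u)⟩ : Fin (∑ v, a₀ v + 1))))
    have hAxy : A x = A y := by
      funext u
      simpa using congrFun hgxy u
    rcases Nat.lt_or_gt_of_ne hxy with h | h
    · exact ⟨x, y - x, by omega, by rw [show x + (y - x) = y by omega, hAxy]⟩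
    · exact ⟨y, x - y, by omega, by rw [show y + (x - y) = x by omega, hAxy]⟩
  have hper : ∀ t, N ≤ t → A (t + p) = A t := by
    intro t ht
    obtain ⟨e, rfl⟩ : ∃ e, t = N + e := ⟨t - N, by omega⟩
    calc A (N + e + p) = A ((N + p) + e) := by rw [show N + e + p = (N+p)+e by omega]
      _ = (candyRound (SimpleGraph.cycleGraph (d+3)))^[e] (A (N+p)) := hiter (N+p) e
      _ = (candyRound (SimpleGraph.cycleGraph (d+3)))^[e] (A N) := by rw [hNp]
      _ = A (N + e) := (hiter N e).symm
  have hmod : ∀ e, A (N + e) = A (N + e % p) := by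
    intro e
    induction e using Nat.strong_induction_on with
    | _ e ih =>
      by_cases h : e < p
      · rw [Nat.mod_eq_of_lt h]
      · have h1 : A (N + e) = A (N + (e - p)) := by
          rw [show N + e = (N + (e - p)) + p by omega]
          exact hper _ (by omega)
        have h2 : (e - p) % p = e % p := (Nat.mod_eq_sub_mod (by omega)).symm
        rw [h1, ih (e - p) (by omega), h2]
  -- the finisher: all rich at time N gives a fixed point
  have finish : (∀ u, 2 ≤ A N u) → ∀ k, N ≤ k → A k = A N := by
    intro hall
    have hfix : A (N+1) = A N := by
      funext u
      have hs := hstep N u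
      have b1 : bb (A N) u = 1 := if_pos (hall u)
      have b2 : bb (A N) (u-1) = 1 := if_pos (hall (u-1))
      have b3 : bb (A N) (u+1) = 1 := if_pos (hall (u+1))
      omega
    have hstay : ∀ e, A (N + e) = A N := by
      intro e
      induction e with
      | zero => rfl
      | succ k ih =>
        calc A (N + (k+1)) = A ((N+k) + 1) := by rw [Nat.add_assoc]
          _ = candyRound (SimpleGraph.cycleGraph (d+3)) (A (N+k)) := hA (N+k)
          _ = candyRound (SimpleGraph.cycleGraph (d+3)) (A N) := by rw [ih]
          _ = A (N+1) := (hA N).symm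
          _ = A N := hfix
    intro k hk
    have := hstay (k - N)
    rwa [show N + (k - N) = k by omega] at this
  -- max over the periodic window
  set M := (Finset.range p).sup (fun i => Finset.univ.sup (A (N+i))) with hMdef
  have hM : ∀ s, N ≤ s → ∀ u, A s u ≤ M := by
    intro s hs u
    obtain ⟨e, rfl⟩ : ∃ e, s = N + e := ⟨s - N, by omega⟩
    rw [hmod e]
    exact le_trans (Finset.le_sup (mem_univ u))
      (Finset.le_sup (f := fun i => Finset.univ.sup (A (N+i))) (mem_range.mpr (Nat.mod_lt e hp)))
  by_cases hM4 : 4 ≤ M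
  · -- large max: propagate richness around the cycle
    obtain ⟨i, hi, hiM⟩ := Finset.exists_mem_eq_sup (Finset.range p)
      ⟨0, mem_range.mpr hp⟩ (fun i => Finset.univ.sup (A (N+i)))
    obtain ⟨v, hv, hvM⟩ := Finset.exists_mem_eq_sup (Finset.univ : Finset (Fin (d+3)))
      univ_nonempty (A (N+i))
    rw [mem_range] at hi
    have hAiv : A (N+i) v = M := by rw [hMdef, hiM, hvM]
    have ht₀ : A (N + i + p) v = M := by rw [hper (N+i) (by omega), hAiv]
    have Lstep : ∀ s, N ≤ s → A (s+1) v = M →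
        A s v = M ∧ 2 ≤ A s (v-1) ∧ 2 ≤ A s (v+1) := by
      intro s hs hsM
      have h := hstep s v
      have hb1 := bb_cases (A s) v
      have hb2 := bb_cases (A s) (v-1)
      have hb3 := bb_cases (A s) (v+1)
      have hle := hM s hs v
      omega
    have hconstv : ∀ s, N ≤ s → s ≤ N + i + p → A s v = M := by
      have hd : ∀ e, e ≤ i + p → A (N + i + p - e) v = M := by
        intro e
        induction e with
        | zero => intro _; simpa using ht₀
        | succ k ih =>
          intro hk
          have h1 := ih (by omega)
          rw [show N + i + p - k = (N + i + p - (k+1)) + 1 by omega] at h1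
          exact (Lstep (N + i + p - (k+1)) (by omega) h1).1
      intro s h1 h2
      have := hd (N + i + p - s) (by omega)
      rwa [show N + i + p - (N + i + p - s) = s by omega] at this
    have hnbv : ∀ s, N ≤ s → s < N + i + p → 2 ≤ A s (v-1) ∧ 2 ≤ A s (v+1) := by
      intro s h1 h2
      have h3 := Lstep s h1 (hconstv (s+1) (by omega) (by omega))
      exact ⟨h3.2.1, h3.2.2⟩
    -- propagation lemma
    have Qlem : ∀ x : Fin (d+3), (∀ s, N ≤ s → s < N + p → 2 ≤ A s x) →
        (∀ s, N ≤ s → s < N + p → 2 ≤ A s (x - 1)) →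
        (∀ s, N ≤ s → s < N + p → 2 ≤ A s (x + 1)) := by
      intro x hx hx'
      have key : ∀ s, N ≤ s → s < N + p → A (s+1) x + 1 = A s x + bb (A s) (x+1) := by
        intro s h1 h2
        have hs := hstep s x
        have b1 : bb (A s) x = 1 := if_pos (hx s h1 h2)
        have b2 : bb (A s) (x-1) = 1 := if_pos (hx' s h1 h2)
        omega
      have hmono : ∀ s, N ≤ s → s < N + p → A (s+1) x ≤ A s x := by
        intro s h1 h2
        have hk := key s h1 h2
        have hb := bb_cases (A s) (x+1)
        omega
      have hconst := const_of_antitone_between (fun s => A s x) N p hmono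
        (congrFun hNp x)
      intro s h1 h2
      have e1 : A s x = A N x := hconst s h1 (by omega)
      have e2 : A (s+1) x = A N x := hconst (s+1) (by omega) (by omega)
      have hk := key s h1 h2
      have hb := bb_cases (A s) (x+1)
      omega
    -- induction around the cycle
    have Rall : ∀ j : ℕ,
        (∀ s, N ≤ s → s < N + p → 2 ≤ A s (v + ((j:ℕ) : Fin (d+3)))) ∧
        (∀ s, N ≤ s → s < N + p → 2 ≤ A s (v + ((j+1:ℕ) : Fin (d+3)))) := by
      intro j
      induction j with
      | zero =>
        constructor
        · intro s h1 h2
          have h3 : A s v = M := hconstv s h1 (by omega)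
          rw [show v + ((0:ℕ) : Fin (d+3)) = v by push_cast; ring]
          omega
        · intro s h1 h2
          rw [show v + ((1:ℕ) : Fin (d+3)) = v + 1 by push_cast; ring]
          exact (hnbv s h1 (by omega)).2
      | succ k ih =>
        refine ⟨ih.2, ?_⟩
        have hQ := Qlem (v + ((k+1:ℕ) : Fin (d+3))) ih.2 ?side
        · intro s h1 h2
          have := hQ s h1 h2
          rwa [show v + ((k+1:ℕ) : Fin (d+3)) + 1 = v + ((k+1+1:ℕ) : Fin (d+3)) by
            push_cast; ring] at this
        · intro s h1 h2
          rw [show v + ((k+1:ℕ) : Fin (d+3)) - 1 = v + ((k:ℕ) : Fin (d+3)) by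
            push_cast; ring]
          exact ih.1 s h1 h2
    have hallrich : ∀ u, 2 ≤ A N u := by
      intro u
      have h := (Rall (u - v).val).1 N le_rfl (by omega)
      rwa [Fin.cast_val_eq_self, show v + (u - v) = u by ring] at h
    exact ⟨N, finish hallrich⟩
  · -- small max: total ≥ 3n forces everyone rich
    by_cases hall : ∀ u, 2 ≤ A N u
    · exact ⟨N, finish hall⟩
    · exfalso
      push_neg at hall
      obtain ⟨w, hw⟩ := hall
      have h3 : ∀ u, A N u ≤ 3 := fun u => le_trans (hM N le_rfl u) (by omega)
      have hsplit : ∑ u, A N u = A N w + ∑ u ∈ univ.erase w, A N u :=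
        (Finset.add_sum_erase univ (A N) (mem_univ w)).symm
      have hle : ∑ u ∈ univ.erase w, A N u ≤ (univ.erase w).card • 3 :=
        Finset.sum_le_card_nsmul _ _ 3 (fun x _ => h3 x)
      rw [smul_eq_mul] at hle
      have hcard : (univ.erase w).card = d + 2 := by
        rw [Finset.card_erase_of_mem (mem_univ w), Finset.card_univ, Fintype.card_fin]
        omega
      rw [hcard] at hle
      have hs := hsum N
      omega

theorem candy_passing_cycle_stabilizes (n : ℕ) (hn : 3 ≤ n)
    (a₀ : Fin n → ℕ) (htot : 3 * n ≤ ∑ v, a₀ v) :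
    ∃ N : ℕ, ∀ m ≥ N,
      (candyRound (SimpleGraph.cycleGraph n))^[m] a₀ =
      (candyRound (SimpleGraph.cycleGraph n))^[N] a₀ := by
  obtain ⟨d, rfl⟩ : ∃ d, n = d + 3 := ⟨n - 3, by omega⟩
  obtain ⟨N, hN⟩ := main_lemma d a₀ htot
  exact ⟨N, fun m hm => hN m hm⟩
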